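/- Let G be a topological group, 𝒜 an amenable admissible subalgebra of CB(G), and μ a left invariant mean on 𝒜, regarded as a regular Borel probability measure on G^𝒜. Then the support of μ is a closed left ideal of G^𝒜: ε(s)·x ∈ supp(μ) for every s ∈ G and x ∈ supp(μ). -/

import Mathlib

open Pointwise

/-- An abstract model of the compactification `G^𝒜` associated to a unital
left-translation-invariant C*-subalgebra `A` of `CB(G)`: a compact Hausdorff space `X` together
with the (dense-range) evaluation map `ε : G → X`, the natural left action of `G` on `X`
(`(ε(s)x)(f) = x(ₛf)`), and the Gelfand correspondence identifying `A` with `C(X)`. -/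
structure GCompactification (G : Type*) [TopologicalSpace G] [Group G]
    (A : Set (G → ℂ)) (X : Type*) [TopologicalSpace X] [CompactSpace X] [T2Space X] where
  eps : G → X
  dense : DenseRange eps
  act : G → X → X
  act_eps : ∀ s t : G, act s (eps t) = eps (s * t)
  act_mul : ∀ s t : G, ∀ x : X, act (s * t) x = act s (act t x)
  act_cont : ∀ s : G, Continuous (act s)
  gelfand : (G → ℂ) → (X → ℂ)
  gelfand_cont : ∀ f ∈ A, Continuous (gelfand f)
  gelfand_eps : ∀ f ∈ A, ∀ s : G, gelfand f (eps s) = f s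
  mem_of_cont : ∀ φ : X → ℂ, Continuous φ → (fun s => φ (eps s)) ∈ A

/-- The semigroup compactification `G^𝒜` of an admissible subalgebra `A`: additionally `X` carries
an associative multiplication which is right topological, extends that of `G`, and restricts to
the action of `G`. -/
structure GSemigroupCompactification (G : Type*) [TopologicalSpace G] [Group G]
    (A : Set (G → ℂ)) (X : Type*) [TopologicalSpace X] [CompactSpace X] [T2Space X]
    extends GCompactification G A X where
  mul : X → X → X
  mul_assoc : ∀ x y z : X, mul (mul x y) z = mul x (mul y z)
  right_cont : ∀ y : X, Continuous fun x => mul x y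
  eps_act : ∀ (s : G) (x : X), mul (eps s) x = act s x

/-- `T` is an `𝒜`-set: for every open neighbourhood `U` of `e` there is an open neighbourhood `V`
of `e` with `closure V ⊆ U` such that for each `T₁ ⊆ T` some `h ∈ A` is `1` on `VT₁` and `0` off
`UT₁`. -/
def IsASet {G : Type*} [TopologicalSpace G] [Group G] (A : Set (G → ℂ)) (T : Set G) : Prop :=
  ∀ U : Set G, IsOpen U → (1 : G) ∈ U →
    ∃ V : Set G, IsOpen V ∧ (1 : G) ∈ V ∧ closure V ⊆ U ∧
      ∀ T₁ ⊆ T, ∃ h ∈ A, (∀ x ∈ V * T₁, h x = 1) ∧ (∀ x ∉ U * T₁, h x = 0)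

/-- Right translation-compact subsets of a topological group. -/
def RightTranslationCompact {G : Type*} [Group G] [TopologicalSpace G] (T : Set G) : Prop :=
  ∀ L : Set G, ¬ IsCompact (closure L) →
    ∃ F : Set G, F ⊆ L ∧ F.Finite ∧ IsCompact (closure (⋂ b ∈ F, (b * ·) ⁻¹' T))

open MeasureTheory

/-- Theorem 8.2, first part: the support of a left invariant mean `μ` on an admissible subalgebra
`𝒜` (regarded as a regular Borel probability measure on `G^𝒜`) is a closed left ideal of `G^𝒜`;
in particular `ε(s)·x ∈ supp(μ)` for every `s ∈ G` and `x ∈ supp(μ)`. -/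
theorem support_of_invariant_mean_left_ideal
    {G : Type*} [TopologicalSpace G] [Group G] [IsTopologicalGroup G]
    (A : Set (G → ℂ)) {X : Type*} [TopologicalSpace X] [CompactSpace X] [T2Space X]
    [MeasurableSpace X] [BorelSpace X]
    (C : GSemigroupCompactification G A X)
    (hone : (fun _ : G => (1 : ℂ)) ∈ A)
    (hlinv : ∀ f ∈ A, ∀ s : G, (fun t => f (s * t)) ∈ A)
    (hintro : ∀ f ∈ A, ∀ x : X, (fun s => C.gelfand f (C.act s x)) ∈ A)
    (μ : Measure X) [IsProbabilityMeasure μ] [μ.Regular]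
    (hinvariant : ∀ f ∈ A, ∀ s : G,
      ∫ x, C.gelfand (fun t => f (s * t)) x ∂μ = ∫ x, C.gelfand f x ∂μ) :
    IsClosed {x : X | ∀ O : Set X, IsOpen O → x ∈ O → μ O ≠ 0} ∧
    (∀ s : G, ∀ x ∈ {x : X | ∀ O : Set X, IsOpen O → x ∈ O → μ O ≠ 0},
      C.act s x ∈ {x : X | ∀ O : Set X, IsOpen O → x ∈ O → μ O ≠ 0}) ∧
    (∀ y : X, ∀ x ∈ {x : X | ∀ O : Set X, IsOpen O → x ∈ O → μ O ≠ 0},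
      C.mul y x ∈ {x : X | ∀ O : Set X, IsOpen O → x ∈ O → μ O ≠ 0}) := by
  classical
  set S : Set X := {x : X | ∀ O : Set X, IsOpen O → x ∈ O → μ O ≠ 0} with hS
  -- closedness
  have hSclosed : IsClosed S := by
    rw [← isOpen_compl_iff, isOpen_iff_forall_mem_open]
    intro x hx
    simp only [hS, Set.mem_compl_iff, Set.mem_setOf_eq, not_forall] at hx
    obtain ⟨O, hO, hxO, hμO⟩ := hx
    rw [not_not] at hμO
    refine ⟨O, ?_, hO, hxO⟩
    intro z hz hzS
    exact hzS O hO hz hμO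
  -- gelfand identification of continuous functions
  have gelfand_of_cont : ∀ φ : X → ℂ, Continuous φ →
      C.gelfand (fun s => φ (C.eps s)) = φ := by
    intro φ hφ
    have hmem := C.mem_of_cont φ hφ
    refine C.dense.equalizer (C.gelfand_cont _ hmem) hφ ?_
    funext s
    simp [C.gelfand_eps _ hmem s]
  -- translated gelfand
  have gelfand_translate : ∀ g ∈ A, ∀ s : G,
      C.gelfand (fun t => g (s * t)) = fun x => C.gelfand g (C.act s x) := by
    intro g hg s
    refine C.dense.equalizer (C.gelfand_cont _ (hlinv g hg s))
      ((C.gelfand_cont g hg).comp (C.act_cont s)) ?_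
    funext t
    simp only [Function.comp_apply]
    rw [C.gelfand_eps _ (hlinv g hg s) t, C.act_eps s t, C.gelfand_eps _ hg (s * t)]
  -- key invariance for arbitrary continuous functions
  have key : ∀ φ : X → ℂ, Continuous φ → ∀ s : G,
      ∫ x, φ (C.act s x) ∂μ = ∫ x, φ x ∂μ := by
    intro φ hφ s
    have hmem := C.mem_of_cont φ hφ
    have h1 := hinvariant _ hmem s
    rw [gelfand_translate _ hmem s, gelfand_of_cont φ hφ] at h1
    exact h1
  -- the action preserves the support
  have hact : ∀ s : G, ∀ x ∈ S, C.act s x ∈ S := by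
    intro s x hx O hO hmemO hμO
    -- preimage
    have hP : IsOpen ((C.act s) ⁻¹' O) := hO.preimage (C.act_cont s)
    have hxP : x ∈ (C.act s) ⁻¹' O := hmemO
    have hμP : μ ((C.act s) ⁻¹' O) ≠ 0 := hx _ hP hxP
    -- inner regularity: get a compact set of positive measure inside the preimage
    obtain ⟨K, hKsub, hKcomp, hKpos⟩ :=
      MeasureTheory.Measure.Regular.innerRegular (μ := μ) hP 0 (pos_iff_ne_zero.mpr hμP)
    -- Urysohn function
    have himg : IsCompact (C.act s '' K) := hKcomp.image (C.act_cont s)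
    have himgsub : C.act s '' K ⊆ O := by
      rintro _ ⟨k, hk, rfl⟩
      exact hKsub hk
    obtain ⟨φ, hφ0, hφ1, hφmem⟩ := exists_continuous_zero_one_of_isClosed
      (isClosed_compl_iff.mpr hO) himg.isClosed
      (Set.disjoint_left.mpr (fun a ha hb => ha (himgsub hb)))
    -- φ vanishes a.e. since it is supported in O and μ O = 0
    have hsub : {z : X | ¬ φ z = 0} ⊆ O := by
      intro z hz
      by_contra hzO
      exact hz (hφ0 hzO)
    have hφae : (fun z => φ z) =ᵐ[μ] 0 := by
      refine MeasureTheory.ae_iff.mpr ?_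
      exact le_antisymm (le_trans (measure_mono hsub) (le_of_eq hμO)) zero_le
    have hint0 : ∫ z, φ z ∂μ = 0 := by
      rw [MeasureTheory.integral_congr_ae hφae]; simp
    -- complexify and apply invariance
    have hψ : Continuous fun z : X => ((φ z : ℝ) : ℂ) :=
      Complex.continuous_ofReal.comp φ.continuous
    have hkey := key _ hψ s
    have hkeyR : ∫ z, φ (C.act s z) ∂μ = ∫ z, φ z ∂μ := by
      have h1 : ∫ z, ((φ (C.act s z) : ℝ) : ℂ) ∂μ = ((∫ z, φ (C.act s z) ∂μ : ℝ) : ℂ) :=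
        integral_ofReal
      have h2 : ∫ z, ((φ z : ℝ) : ℂ) ∂μ = ((∫ z, φ z ∂μ : ℝ) : ℂ) := integral_ofReal
      rw [h1, h2] at hkey
      exact_mod_cast hkey
    -- lower bound via the indicator of K
    have hφint : MeasureTheory.Integrable (fun z => φ (C.act s z)) μ :=
      Continuous.integrable_of_hasCompactSupport (φ.continuous.comp (C.act_cont s))
        (isClosed_tsupport _).isCompact
    have hindint : MeasureTheory.Integrable (K.indicator fun _ => (1 : ℝ)) μ :=
      (MeasureTheory.integrable_indicator_iff hKcomp.measurableSet).mpr
        (MeasureTheory.integrableOn_const (measure_ne_top μ K))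
    have hmono : ∀ z, K.indicator (fun _ => (1 : ℝ)) z ≤ φ (C.act s z) := by
      intro z
      by_cases hz : z ∈ K
      · rw [Set.indicator_of_mem hz]
        exact le_of_eq (hφ1 ⟨z, hz, rfl⟩).symm
      · rw [Set.indicator_of_notMem hz]
        exact (hφmem _).1
    have hle : ∫ z, K.indicator (fun _ => (1 : ℝ)) z ∂μ ≤ ∫ z, φ (C.act s z) ∂μ :=
      MeasureTheory.integral_mono hindint hφint hmono
    rw [MeasureTheory.integral_indicator_const _ hKcomp.measurableSet] at hle
    rw [hkeyR, hint0] at hle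
    simp only [smul_eq_mul, mul_one] at hle
    have : (0 : ℝ) < (μ K).toReal :=
      ENNReal.toReal_pos (pos_iff_ne_zero.mp hKpos) (measure_ne_top μ K)
    linarith [show μ.real K = (μ K).toReal from rfl]
  refine ⟨hSclosed, hact, ?_⟩
  -- left ideal property via density
  intro y x hx
  have hcont : Continuous fun z : X => C.mul z x := C.right_cont x
  have hclosed : IsClosed ((fun z : X => C.mul z x) ⁻¹' S) := hSclosed.preimage hcont
  have hrange : Set.range C.eps ⊆ (fun z : X => C.mul z x) ⁻¹' S := by
    rintro _ ⟨s, rfl⟩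
    simp only [Set.mem_preimage, C.eps_act s x]
    exact hact s x hx
  have huniv : ((fun z : X => C.mul z x) ⁻¹' S) = Set.univ := by
    have h2 := hclosed.closure_subset_iff.mpr hrange
    rw [C.dense.closure_range] at h2
    exact Set.eq_univ_of_univ_subset h2
  have : y ∈ (fun z : X => C.mul z x) ⁻¹' S := by rw [huniv]; trivial
  exact this
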